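/- Let Γ be a group acting on a set I, and let J denote the set of nonempty finite subsets of I, equipped with the induced Γ-action g · F = {g · k : k ∈ F}. If there exists a Γ-invariant mean on J, then there exists a Γ-invariant mean on I. -/

import Mathlib

namespace Stmt10Aux

variable {X : Type*} (m : Set X → ℝ)

/-- Truncated "layer" sum: an integral for bounded `ℕ`-valued functions. -/
def T (φ : X → ℕ) (B : ℕ) : ℝ := ∑ k ∈ Finset.Icc 1 B, m {x | k ≤ φ x}

section
variable (hm_nonneg : ∀ A, 0 ≤ m A)
  (hm_add : ∀ A B, Disjoint A B → m (A ∪ B) = m A + m B)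

include hm_add in
lemma m_empty : m ∅ = 0 := by
  have := hm_add ∅ ∅ disjoint_bot_right
  simp only [Set.union_empty] at this
  linarith

include hm_nonneg hm_add in
lemma m_mono {A B : Set X} (h : A ⊆ B) : m A ≤ m B := by
  have h1 : m (A ∪ B \ A) = m A + m (B \ A) := hm_add _ _ disjoint_sdiff_self_right
  rw [Set.union_diff_cancel h] at h1
  have := hm_nonneg (B \ A)
  linarith

include hm_add in
lemma m_biUnion {α : Type*} (s : Finset α) (A : α → Set X)
    (h : (s : Set α).PairwiseDisjoint A) :
    m (⋃ a ∈ s, A a) = ∑ a ∈ s, m (A a) := by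
  classical
  induction s using Finset.induction_on with
  | empty => simpa using m_empty m hm_add
  | @insert a s ha ih =>
    rw [Finset.set_biUnion_insert, Finset.sum_insert ha, hm_add, ih]
    · exact h.subset (Finset.coe_subset.mpr (Finset.subset_insert _ _))
    · rw [Set.disjoint_iUnion_right]
      intro b
      rw [Set.disjoint_iUnion_right]
      intro hb
      exact h (by simp) (by simp [hb]) (fun hab => ha (hab ▸ hb))

include hm_nonneg in
lemma T_nonneg (φ : X → ℕ) (B : ℕ) : 0 ≤ T m φ B :=
  Finset.sum_nonneg fun _ _ => hm_nonneg _

include hm_nonneg hm_add in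
lemma T_mono {φ ψ : X → ℕ} (B : ℕ) (h : ∀ x, φ x ≤ ψ x) : T m φ B ≤ T m ψ B :=
  Finset.sum_le_sum fun k _ => m_mono m hm_nonneg hm_add (fun x hx => le_trans hx (h x))

include hm_add in
lemma T_ext {φ : X → ℕ} {B B' : ℕ} (hφ : ∀ x, φ x ≤ B) (h : B ≤ B') :
    T m φ B' = T m φ B := by
  refine (Finset.sum_subset (Finset.Icc_subset_Icc_right h) ?_).symm
  intro k hk hk'
  simp only [Finset.mem_Icc] at hk hk'
  have hkB : B < k := by omega
  have : {x | k ≤ φ x} = (∅ : Set X) := by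
    ext x; simp only [Set.mem_setOf_eq, Set.mem_empty_iff_false, iff_false]
    exact fun hc => absurd (le_trans hc (hφ x)) (by omega)
  rw [this, m_empty m hm_add]

include hm_nonneg hm_add in
lemma T_le {φ : X → ℕ} (B : ℕ) (hm_univ : m Set.univ = 1) : T m φ B ≤ B := by
  calc T m φ B ≤ ∑ _k ∈ Finset.Icc 1 B, m Set.univ :=
        Finset.sum_le_sum fun k _ => m_mono m hm_nonneg hm_add (Set.subset_univ _)
    _ = B := by simp [hm_univ]

include hm_add in
lemma T_eq {φ : X → ℕ} {B : ℕ} (hφ : ∀ x, φ x ≤ B) :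
    T m φ B = ∑ v ∈ Finset.Icc 1 B, (v : ℝ) * m {x | φ x = v} := by
  classical
  have key : ∀ k ∈ Finset.Icc 1 B,
      m {x | k ≤ φ x} = ∑ v ∈ Finset.Icc 1 B, if k ≤ v then m {x | φ x = v} else 0 := by
    intro k hk
    simp only [Finset.mem_Icc] at hk
    have hU : {x | k ≤ φ x} = ⋃ v ∈ Finset.Icc k B, {x | φ x = v} := by
      ext x
      simp only [Set.mem_setOf_eq, Set.mem_iUnion, Finset.mem_Icc]
      constructor
      · intro h; exact ⟨φ x, ⟨h, hφ x⟩, rfl⟩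
      · rintro ⟨v, ⟨hv, _⟩, rfl⟩; exact hv
    rw [hU, m_biUnion m hm_add]
    · rw [← Finset.sum_filter]
      congr 1
      ext v
      simp only [Finset.mem_Icc, Finset.mem_filter]
      omega
    · intro u hu v hv huv
      simp only [Set.disjoint_left, Set.mem_setOf_eq]
      rintro x rfl h2
      exact huv h2
  rw [T]
  rw [Finset.sum_congr rfl key, Finset.sum_comm]
  refine Finset.sum_congr rfl fun v hv => ?_
  simp only [Finset.mem_Icc] at hv
  rw [← Finset.sum_filter]
  have : (Finset.Icc 1 B).filter (fun k => k ≤ v) = Finset.Icc 1 v := by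
    ext k; simp only [Finset.mem_filter, Finset.mem_Icc]; omega
  rw [this, Finset.sum_const, Nat.card_Icc]
  simp [nsmul_eq_mul]

end

section
variable (hm_nonneg : ∀ A, 0 ≤ m A)
  (hm_add : ∀ A B, Disjoint A B → m (A ∪ B) = m A + m B)

include hm_add in
lemma T_range_eq {φ : X → ℕ} {B : ℕ} (hφ : ∀ x, φ x ≤ B) :
    T m φ B = ∑ v ∈ Finset.range (B + 1), (v : ℝ) * m {x | φ x = v} := by
  rw [T_eq m hm_add hφ]
  refine Finset.sum_subset ?_ ?_
  · intro v hv
    simp only [Finset.mem_Icc] at hv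
    simp only [Finset.mem_range]; omega
  · intro v hv hv'
    simp only [Finset.mem_range] at hv
    simp only [Finset.mem_Icc] at hv'
    have : v = 0 := by omega
    simp [this]

include hm_add in
lemma T_add {φ ψ : X → ℕ} {B C : ℕ} (hφ : ∀ x, φ x ≤ B) (hψ : ∀ x, ψ x ≤ C) :
    T m (fun x => φ x + ψ x) (B + C) = T m φ B + T m ψ C := by
  classical
  have hsum : ∀ x, φ x + ψ x ≤ B + C := fun x => Nat.add_le_add (hφ x) (hψ x)
  set P : ℕ × ℕ → ℝ := fun p => m {x | φ x = p.1 ∧ ψ x = p.2} with hP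
  have hdisj : ∀ (s : Finset (ℕ × ℕ)), (↑s : Set (ℕ × ℕ)).PairwiseDisjoint
      (fun p => {x | φ x = p.1 ∧ ψ x = p.2}) := by
    intro s p hp q hq hpq
    simp only [Set.disjoint_left, Set.mem_setOf_eq]
    rintro x ⟨h1, h2⟩ ⟨h3, h4⟩
    exact hpq (Prod.ext (h1 ▸ h3.symm ▸ rfl) (h2 ▸ h4.symm ▸ rfl))
  -- decompose level sets of the sum
  have hkey : ∀ w, m {x | φ x + ψ x = w} =
      ∑ p ∈ (Finset.range (B+1) ×ˢ Finset.range (C+1)).filter (fun p => p.1 + p.2 = w), P p := by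
    intro w
    rw [← m_biUnion m hm_add _ _ (hdisj _)]
    congr 1
    ext x
    simp only [Set.mem_setOf_eq, Set.mem_iUnion, Finset.mem_filter, Finset.mem_product,
      Finset.mem_range]
    constructor
    · intro h
      refine ⟨(φ x, ψ x), ?_, rfl, rfl⟩
      have := hφ x; have := hψ x
      omega
    · rintro ⟨p, hp, h1, h2⟩
      omega
  rw [T_range_eq m hm_add hsum, T_range_eq m hm_add hφ, T_range_eq m hm_add hψ]
  have step : ∑ w ∈ Finset.range (B + C + 1), (w : ℝ) * m {x | φ x + ψ x = w}
      = ∑ p ∈ Finset.range (B+1) ×ˢ Finset.range (C+1), ((p.1 : ℝ) + p.2) * P p := by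
    calc ∑ w ∈ Finset.range (B + C + 1), (w : ℝ) * m {x | φ x + ψ x = w}
        = ∑ w ∈ Finset.range (B + C + 1), ∑ p ∈ Finset.range (B+1) ×ˢ Finset.range (C+1),
            (if p.1 + p.2 = w then (w : ℝ) * P p else 0) := by
          refine Finset.sum_congr rfl fun w _ => ?_
          rw [hkey w, Finset.mul_sum, Finset.sum_filter]
      _ = ∑ p ∈ Finset.range (B+1) ×ˢ Finset.range (C+1), ∑ w ∈ Finset.range (B + C + 1),
            (if p.1 + p.2 = w then (w : ℝ) * P p else 0) := Finset.sum_comm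
      _ = ∑ p ∈ Finset.range (B+1) ×ˢ Finset.range (C+1), ((p.1 : ℝ) + p.2) * P p := by
          refine Finset.sum_congr rfl fun p hp => ?_
          simp only [Finset.mem_product, Finset.mem_range] at hp
          have hmem : p.1 + p.2 ∈ Finset.range (B + C + 1) := by
            simp only [Finset.mem_range]; omega
          rw [Finset.sum_ite_eq, if_pos hmem, Nat.cast_add]
  rw [step]
  have split : ∑ p ∈ Finset.range (B+1) ×ˢ Finset.range (C+1), ((p.1 : ℝ) + p.2) * P p
      = (∑ p ∈ Finset.range (B+1) ×ˢ Finset.range (C+1), (p.1 : ℝ) * P p)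
        + ∑ p ∈ Finset.range (B+1) ×ˢ Finset.range (C+1), (p.2 : ℝ) * P p := by
    rw [← Finset.sum_add_distrib]
    exact Finset.sum_congr rfl fun p _ => by ring
  rw [split]
  congr 1
  · rw [Finset.sum_product]
    refine Finset.sum_congr rfl fun u _ => ?_
    dsimp only
    rw [← Finset.mul_sum]
    congr 1
    rw [← m_biUnion m hm_add _ _ (by
      intro a ha b hb hab
      simp only [Set.disjoint_left, Set.mem_setOf_eq]
      rintro x ⟨_, h2⟩ ⟨_, h4⟩
      exact hab (h2 ▸ h4.symm ▸ rfl))]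
    congr 1
    ext x
    simp only [Set.mem_setOf_eq, Set.mem_iUnion, Finset.mem_range]
    constructor
    · rintro ⟨v, _, h, _⟩; exact h
    · intro h; exact ⟨ψ x, by have := hψ x; omega, h, rfl⟩
  · rw [Finset.sum_product_right]
    refine Finset.sum_congr rfl fun v _ => ?_
    dsimp only
    rw [← Finset.mul_sum]
    congr 1
    rw [← m_biUnion m hm_add _ _ (by
      intro a ha b hb hab
      simp only [Set.disjoint_left, Set.mem_setOf_eq]
      rintro x ⟨h1, _⟩ ⟨h3, _⟩
      exact hab (h1 ▸ h3.symm ▸ rfl))]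
    congr 1
    ext x
    simp only [Set.mem_setOf_eq, Set.mem_iUnion, Finset.mem_range]
    constructor
    · rintro ⟨u', _, _, h⟩; exact h
    · intro h; exact ⟨φ x, by have := hφ x; omega, rfl, h⟩

include hm_add in
lemma T_const {c B : ℕ} (h : c ≤ B) (hm_univ : m Set.univ = 1) :
    T m (fun _ => c) B = c := by
  classical
  rw [T]
  have : ∀ k ∈ Finset.Icc 1 B, m {x : X | k ≤ c} = if k ≤ c then 1 else 0 := by
    intro k _
    by_cases hk : k ≤ c
    · have hset : {x : X | k ≤ c} = Set.univ := by ext x; simp [hk]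
      rw [hset, hm_univ, if_pos hk]
    · have hset : {x : X | k ≤ c} = ∅ := by ext x; simp [hk]
      rw [hset, m_empty m hm_add, if_neg hk]
  rw [Finset.sum_congr rfl this, ← Finset.sum_filter]
  have : (Finset.Icc 1 B).filter (fun k => k ≤ c) = Finset.Icc 1 c := by
    ext k; simp only [Finset.mem_filter, Finset.mem_Icc]; omega
  rw [this, Finset.sum_const, Nat.card_Icc]
  simp

end

section
variable (hm_nonneg : ∀ A, 0 ≤ m A)
  (hm_add : ∀ A B, Disjoint A B → m (A ∪ B) = m A + m B)

include hm_nonneg in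
lemma T_mono_bound {φ : X → ℕ} {B B' : ℕ} (h : B ≤ B') : T m φ B ≤ T m φ B' :=
  Finset.sum_le_sum_of_subset_of_nonneg (Finset.Icc_subset_Icc_right h)
    (fun _ _ _ => hm_nonneg _)

end

/-- Discretized average of `f` at scale `n`. -/
noncomputable def av (n : ℕ) (f : X → ℝ) : ℝ := T m (fun x => ⌊(n : ℝ) * f x⌋₊) (2 * n) / n

section
variable (hm_nonneg : ∀ A, 0 ≤ m A)
  (hm_univ : m Set.univ = 1)
  (hm_add : ∀ A B, Disjoint A B → m (A ∪ B) = m A + m B)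

lemma floor_le_of_le {f : X → ℝ} {n c : ℕ} (hf : ∀ x, f x ≤ c) (x : X) :
    ⌊(n : ℝ) * f x⌋₊ ≤ c * n := by
  have : (n : ℝ) * f x ≤ ((c * n : ℕ) : ℝ) := by
    push_cast
    nlinarith [hf x, Nat.cast_nonneg (α := ℝ) n]
  calc ⌊(n : ℝ) * f x⌋₊ ≤ ⌊((c * n : ℕ) : ℝ)⌋₊ := Nat.floor_mono this
    _ = c * n := Nat.floor_natCast _

include hm_nonneg in
lemma av_nonneg (n : ℕ) (f : X → ℝ) : 0 ≤ av m n f :=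
  div_nonneg (T_nonneg m hm_nonneg _ _) (Nat.cast_nonneg n)

include hm_nonneg hm_add hm_univ in
lemma av_le_two {n : ℕ} (hn : 1 ≤ n) (f : X → ℝ) : av m n f ≤ 2 := by
  have hn' : (0 : ℝ) < n := by exact_mod_cast hn
  rw [av, div_le_iff₀ hn']
  calc T m (fun x => ⌊(n : ℝ) * f x⌋₊) (2 * n) ≤ (2 * n : ℕ) :=
        T_le m hm_nonneg hm_add _ hm_univ
    _ = 2 * n := by push_cast; ring

include hm_nonneg hm_univ hm_add in
lemma av_add {n : ℕ} (hn : 1 ≤ n) {f g : X → ℝ}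
    (hf0 : ∀ x, 0 ≤ f x) (hf1 : ∀ x, f x ≤ 1) (hg0 : ∀ x, 0 ≤ g x) (hg1 : ∀ x, g x ≤ 1) :
    av m n f + av m n g ≤ av m n (fun x => f x + g x) ∧
      av m n (fun x => f x + g x) ≤ av m n f + av m n g + 1 / n := by
  have hn' : (0 : ℝ) < n := by exact_mod_cast hn
  set φ : X → ℕ := fun x => ⌊(n : ℝ) * f x⌋₊ with hφdef
  set ψ : X → ℕ := fun x => ⌊(n : ℝ) * g x⌋₊ with hψdef
  set χ : X → ℕ := fun x => ⌊(n : ℝ) * (f x + g x)⌋₊ with hχdef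
  have hφb : ∀ x, φ x ≤ n := by
    intro x
    have := floor_le_of_le (f := f) (n := n) (c := 1) (fun y => by simpa using hf1 y) x
    simpa using this
  have hψb : ∀ x, ψ x ≤ n := by
    intro x
    have := floor_le_of_le (f := g) (n := n) (c := 1) (fun y => by simpa using hg1 y) x
    simpa using this
  have hnf0 : ∀ x, (0:ℝ) ≤ (n : ℝ) * f x := fun x => mul_nonneg (Nat.cast_nonneg n) (hf0 x)
  have hng0 : ∀ x, (0:ℝ) ≤ (n : ℝ) * g x := fun x => mul_nonneg (Nat.cast_nonneg n) (hg0 x)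
  have h1 : ∀ x, φ x + ψ x ≤ χ x := by
    intro x
    rw [hχdef, Nat.le_floor_iff (by nlinarith [hf0 x, hg0 x])]
    push_cast
    have := Nat.floor_le (hnf0 x)
    have := Nat.floor_le (hng0 x)
    nlinarith
  have h2 : ∀ x, χ x ≤ φ x + ψ x + 1 := by
    intro x
    have hlt : (n : ℝ) * (f x + g x) < ((φ x + ψ x + 2 : ℕ) : ℝ) := by
      push_cast
      have := Nat.lt_floor_add_one ((n : ℝ) * f x)
      have := Nat.lt_floor_add_one ((n : ℝ) * g x)
      nlinarith
    have := (Nat.floor_lt (by nlinarith [hf0 x, hg0 x])).mpr hlt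
    simp only [hχdef]
    omega
  have hTφ : T m φ (2 * n) = T m φ n := T_ext m hm_add hφb (by omega)
  have hTψ : T m ψ (2 * n) = T m ψ n := T_ext m hm_add hψb (by omega)
  have hTadd : T m (fun x => φ x + ψ x) (2 * n) = T m φ n + T m ψ n := by
    have := T_add m hm_add hφb hψb
    rw [show n + n = 2 * n by ring] at this
    exact this
  have hlow : T m φ n + T m ψ n ≤ T m χ (2 * n) := by
    rw [← hTadd]
    exact T_mono m hm_nonneg hm_add _ h1
  have hhigh : T m χ (2 * n) ≤ T m φ n + T m ψ n + 1 := by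
    have step1 : T m χ (2 * n) ≤ T m (fun x => (φ x + ψ x) + 1) (2 * n) :=
      T_mono m hm_nonneg hm_add _ h2
    have step2 : T m (fun x => (φ x + ψ x) + 1) (2 * n)
        ≤ T m (fun x => (φ x + ψ x) + 1) (2 * n + 1) :=
      T_mono_bound m hm_nonneg (by omega)
    have step3 : T m (fun x => (φ x + ψ x) + 1) (2 * n + 1)
        = T m (fun x => φ x + ψ x) (2 * n) + T m (fun _ => 1) 1 := by
      exact T_add m hm_add (fun x => by have := hφb x; have := hψb x; omega) (fun _ => le_refl 1)
    have step4 : T m (fun _ => (1:ℕ)) 1 = 1 := by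
      have := T_const m hm_add (le_refl 1) hm_univ
      simpa using this
    calc T m χ (2 * n) ≤ T m (fun x => (φ x + ψ x) + 1) (2 * n) := step1
      _ ≤ T m (fun x => (φ x + ψ x) + 1) (2 * n + 1) := step2
      _ = T m (fun x => φ x + ψ x) (2 * n) + T m (fun _ => 1) 1 := step3
      _ = T m φ n + T m ψ n + 1 := by rw [hTadd, step4]
  constructor
  · rw [av, av, av, hTφ, hTψ, ← add_div, div_le_div_iff₀ hn' hn']
    nlinarith [hlow]
  · rw [av, av, av, hTφ, hTψ, ← add_div, ← add_div]
    gcongr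

end

section
variable (hm_nonneg : ∀ A, 0 ≤ m A)
  (hm_univ : m Set.univ = 1)
  (hm_add : ∀ A B, Disjoint A B → m (A ∪ B) = m A + m B)

include hm_nonneg hm_add in
lemma av_double {n : ℕ} (hn : 1 ≤ n) {f : X → ℝ}
    (hf0 : ∀ x, 0 ≤ f x) (hf2 : ∀ x, f x ≤ 2) :
    av m n f ≤ av m (2 * n) f := by
  have hn' : (0 : ℝ) < n := by exact_mod_cast hn
  have hφb : ∀ x, ⌊(n : ℝ) * f x⌋₊ ≤ 2 * n := fun x => by
    have := floor_le_of_le (f := f) (n := n) (c := 2) (fun y => by simpa using hf2 y) x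
    omega
  have hdbl : ∀ x, ⌊(n : ℝ) * f x⌋₊ + ⌊(n : ℝ) * f x⌋₊ ≤ ⌊((2 * n : ℕ) : ℝ) * f x⌋₊ := by
    intro x
    rw [Nat.le_floor_iff (by have := hf0 x; positivity)]
    push_cast
    have := Nat.floor_le (mul_nonneg (Nat.cast_nonneg n) (hf0 x))
    nlinarith
  have hT2 : T m (fun x => ⌊(n : ℝ) * f x⌋₊ + ⌊(n : ℝ) * f x⌋₊) (2 * (2 * n))
      = 2 * T m (fun x => ⌊(n : ℝ) * f x⌋₊) (2 * n) := by
    have := T_add m hm_add hφb hφb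
    rw [show 2 * n + 2 * n = 2 * (2 * n) by ring] at this
    rw [this]; ring
  have hmono : T m (fun x => ⌊(n : ℝ) * f x⌋₊ + ⌊(n : ℝ) * f x⌋₊) (2 * (2 * n))
      ≤ T m (fun x => ⌊((2 * n : ℕ) : ℝ) * f x⌋₊) (2 * (2 * n)) :=
    T_mono m hm_nonneg hm_add _ hdbl
  rw [av, av, div_le_div_iff₀ hn' (by positivity)]
  have h2n : ((2 * n : ℕ) : ℝ) = 2 * (n : ℝ) := by push_cast; ring
  rw [h2n] at hmono ⊢
  nlinarith [hT2, hmono]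

/-- The integral of `f` against `m`, as a supremum of dyadic discretized averages. -/
noncomputable def Intg (f : X → ℝ) : ℝ := ⨆ k : ℕ, av m (2 ^ k) f

include hm_nonneg hm_univ hm_add in
lemma av_pow_monotone {f : X → ℝ} (hf0 : ∀ x, 0 ≤ f x) (hf2 : ∀ x, f x ≤ 2) :
    Monotone (fun k => av m (2 ^ k) f) := by
  apply monotone_nat_of_le_succ
  intro k
  have := av_double m hm_nonneg hm_add (n := 2 ^ k) (Nat.one_le_two_pow) hf0 hf2
  simpa [pow_succ, mul_comm] using this

include hm_nonneg hm_univ hm_add in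
lemma av_pow_bdd (f : X → ℝ) : BddAbove (Set.range fun k => av m (2 ^ k) f) := by
  refine ⟨2, ?_⟩
  rintro y ⟨k, rfl⟩
  exact av_le_two m hm_nonneg hm_univ hm_add Nat.one_le_two_pow f

include hm_nonneg hm_univ hm_add in
lemma intg_tendsto {f : X → ℝ} (hf0 : ∀ x, 0 ≤ f x) (hf2 : ∀ x, f x ≤ 2) :
    Filter.Tendsto (fun k => av m (2 ^ k) f) Filter.atTop (nhds (Intg m f)) :=
  tendsto_atTop_ciSup (av_pow_monotone m hm_nonneg hm_univ hm_add hf0 hf2)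
    (av_pow_bdd m hm_nonneg hm_univ hm_add f)

include hm_nonneg hm_univ hm_add in
lemma Intg_nonneg {f : X → ℝ} : 0 ≤ Intg m f := by
  have h0 : av m (2 ^ 0) f ≤ Intg m f :=
    le_ciSup (av_pow_bdd m hm_nonneg hm_univ hm_add f) 0
  have := av_nonneg m hm_nonneg (2 ^ 0) f
  linarith

include hm_nonneg hm_univ hm_add in
lemma Intg_one : Intg m (fun _ => (1 : ℝ)) = 1 := by
  have hav : ∀ k : ℕ, av m (2 ^ k) (fun _ => (1:ℝ)) = 1 := by
    intro k
    have hpos : (0:ℝ) < (2 ^ k : ℕ) := by positivity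
    rw [av]
    have hfl : (fun x : X => ⌊((2 ^ k : ℕ) : ℝ) * (1:ℝ)⌋₊) = fun _ : X => (2 ^ k : ℕ) := by
      funext x; rw [mul_one, Nat.floor_natCast]
    rw [hfl, T_const m hm_add (by omega) hm_univ, div_self (ne_of_gt hpos)]
  rw [Intg]
  simp only [hav]
  exact ciSup_const

include hm_nonneg hm_univ hm_add in
lemma Intg_add {f g : X → ℝ}
    (hf0 : ∀ x, 0 ≤ f x) (hf1 : ∀ x, f x ≤ 1) (hg0 : ∀ x, 0 ≤ g x) (hg1 : ∀ x, g x ≤ 1) :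
    Intg m (fun x => f x + g x) = Intg m f + Intg m g := by
  have hfg0 : ∀ x, 0 ≤ f x + g x := fun x => add_nonneg (hf0 x) (hg0 x)
  have hfg2 : ∀ x, f x + g x ≤ 2 := fun x => by linarith [hf1 x, hg1 x]
  have hf2 : ∀ x, f x ≤ 2 := fun x => by linarith [hf1 x]
  have hg2 : ∀ x, g x ≤ 2 := fun x => by linarith [hg1 x]
  have hd := intg_tendsto m hm_nonneg hm_univ hm_add hfg0 hfg2
  have hb := intg_tendsto m hm_nonneg hm_univ hm_add hf0 hf2
  have hc := intg_tendsto m hm_nonneg hm_univ hm_add hg0 hg2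
  have hsum : Filter.Tendsto (fun k => av m (2 ^ k) f + av m (2 ^ k) g)
      Filter.atTop (nhds (Intg m f + Intg m g)) := hb.add hc
  have heps : Filter.Tendsto (fun k : ℕ => av m (2 ^ k) f + av m (2 ^ k) g + 1 / (2 ^ k : ℕ))
      Filter.atTop (nhds (Intg m f + Intg m g + 0)) := by
    refine hsum.add ?_
    have : Filter.Tendsto (fun k : ℕ => ((1:ℝ) / 2) ^ k) Filter.atTop (nhds 0) :=
      tendsto_pow_atTop_nhds_zero_of_lt_one (by norm_num) (by norm_num)
    convert this using 2 with k
    push_cast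
    rw [one_div, one_div, inv_pow]
  rw [add_zero] at heps
  have hle : ∀ k : ℕ, av m (2 ^ k) f + av m (2 ^ k) g ≤ av m (2 ^ k) (fun x => f x + g x) :=
    fun k => (av_add m hm_nonneg hm_univ hm_add Nat.one_le_two_pow hf0 hf1 hg0 hg1).1
  have hge : ∀ k : ℕ, av m (2 ^ k) (fun x => f x + g x)
      ≤ av m (2 ^ k) f + av m (2 ^ k) g + 1 / (2 ^ k : ℕ) :=
    fun k => (av_add m hm_nonneg hm_univ hm_add Nat.one_le_two_pow hf0 hf1 hg0 hg1).2
  have hd' : Filter.Tendsto (fun k => av m (2 ^ k) (fun x => f x + g x))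
      Filter.atTop (nhds (Intg m f + Intg m g)) :=
    tendsto_of_tendsto_of_tendsto_of_le_of_le hsum heps hle hge
  exact tendsto_nhds_unique hd hd'

lemma Intg_comp {f : X → ℝ} (σ : X → X) (hσ : ∀ S, m (σ ⁻¹' S) = m S) :
    Intg m (fun x => f (σ x)) = Intg m f := by
  have : ∀ n, av m n (fun x => f (σ x)) = av m n f := by
    intro n
    rw [av, av]
    congr 1
    refine Finset.sum_congr rfl fun k _ => ?_
    exact hσ {x | k ≤ ⌊(n : ℝ) * f x⌋₊}
  rw [Intg, Intg]
  exact congrArg _ (funext fun k => this (2 ^ k))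

end
end Stmt10Aux
/-- If the action of `Γ` on the set `J` of nonempty finite subsets of `I` (with the induced
action) admits an invariant mean, then so does the action of `Γ` on `I`. -/
theorem stmt10 {Γ I : Type*} [Group Γ] [MulAction Γ I] [DecidableEq I]
    (m : Set {F : Finset I // F.Nonempty} → ℝ)
    (hm_nonneg : ∀ A, 0 ≤ m A)
    (hm_univ : m Set.univ = 1)
    (hm_add : ∀ A B, Disjoint A B → m (A ∪ B) = m A + m B)
    (hm_inv : ∀ (g : Γ) (A : Set {F : Finset I // F.Nonempty}),
      m ((fun F : {F : Finset I // F.Nonempty} =>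
        (⟨F.1.image (fun x => g • x), F.2.image _⟩ : {F : Finset I // F.Nonempty})) '' A) = m A) :
    ∃ n : Set I → ℝ,
      (∀ A : Set I, 0 ≤ n A) ∧
      n Set.univ = 1 ∧
      (∀ A B : Set I, Disjoint A B → n (A ∪ B) = n A + n B) ∧
      (∀ (g : Γ) (A : Set I), n ((fun x => g • x) '' A) = n A) := by
  classical
  set fA : Set I → {F : Finset I // F.Nonempty} → ℝ :=
    fun A F => (∑ x ∈ F.1, if x ∈ A then (1:ℝ) else 0) / (F.1.card : ℝ) with hfA
  have hcard : ∀ F : {F : Finset I // F.Nonempty}, (0 : ℝ) < (F.1.card : ℝ) := by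
    intro F
    exact_mod_cast F.2.card_pos
  have f0 : ∀ (A : Set I) (F : {F : Finset I // F.Nonempty}), 0 ≤ fA A F := by
    intro A F
    apply div_nonneg _ (Nat.cast_nonneg _)
    apply Finset.sum_nonneg
    intro x _
    split <;> norm_num
  have f1 : ∀ (A : Set I) (F : {F : Finset I // F.Nonempty}), fA A F ≤ 1 := by
    intro A F
    rw [hfA, div_le_one (hcard F)]
    calc ∑ x ∈ F.1, (if x ∈ A then (1:ℝ) else 0) ≤ ∑ _x ∈ F.1, (1:ℝ) := by
          apply Finset.sum_le_sum
          intro x _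
          split <;> norm_num
      _ = (F.1.card : ℝ) := by rw [Finset.sum_const]; simp
  refine ⟨fun A => Stmt10Aux.Intg m (fA A), ?_, ?_, ?_, ?_⟩
  · intro A
    exact Stmt10Aux.Intg_nonneg m hm_nonneg hm_univ hm_add
  · show Stmt10Aux.Intg m (fA Set.univ) = 1
    have huniv : fA Set.univ = fun _ => (1 : ℝ) := by
      funext F
      rw [hfA]
      simp only [Set.mem_univ, if_true, Finset.sum_const, nsmul_eq_mul, mul_one]
      exact div_self (ne_of_gt (hcard F))
    rw [huniv]
    exact Stmt10Aux.Intg_one m hm_nonneg hm_univ hm_add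
  · intro A B hAB
    show Stmt10Aux.Intg m (fA (A ∪ B)) = Stmt10Aux.Intg m (fA A) + Stmt10Aux.Intg m (fA B)
    have hsplit : fA (A ∪ B) = fun F => fA A F + fA B F := by
      funext F
      rw [hfA]
      simp only
      rw [← add_div, ← Finset.sum_add_distrib]
      congr 1
      apply Finset.sum_congr rfl
      intro x _
      by_cases hA : x ∈ A <;> by_cases hB : x ∈ B
      · exact absurd hB (Set.disjoint_left.mp hAB hA)
      · simp [hA, hB, Set.mem_union]
      · simp [hA, hB, Set.mem_union]
      · simp [hA, hB, Set.mem_union]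
    rw [hsplit]
    exact Stmt10Aux.Intg_add m hm_nonneg hm_univ hm_add (f0 A) (f1 A) (f0 B) (f1 B)
  · intro g A
    show Stmt10Aux.Intg m (fA ((fun x => g • x) '' A)) = Stmt10Aux.Intg m (fA A)
    set σ : {F : Finset I // F.Nonempty} → {F : Finset I // F.Nonempty} := fun F =>
      (⟨F.1.image (fun x => g⁻¹ • x), F.2.image _⟩ : {F : Finset I // F.Nonempty}) with hσdef
    have hσpre : ∀ S : Set {F : Finset I // F.Nonempty}, m (σ ⁻¹' S) = m S := by
      intro S
      have hsurj : Function.Surjective σ := by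
        intro F
        refine ⟨⟨F.1.image (fun x => g • x), F.2.image _⟩, ?_⟩
        rw [hσdef]
        apply Subtype.ext
        simp only [Finset.image_image]
        rw [show ((fun x => g⁻¹ • x) ∘ fun x => g • x) = id by
          funext x; simp [inv_smul_smul]]
        exact Finset.image_id
      have h1 := hm_inv g⁻¹ (σ ⁻¹' S)
      have h2 : σ '' (σ ⁻¹' S) = S := Set.image_preimage_eq S hsurj
      rw [hσdef] at h2
      rw [h2] at h1
      exact h1.symm
    have hcomp : fA ((fun x => g • x) '' A) = fun F => fA A (σ F) := by
      funext F
      rw [hfA]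
      simp only
      have hden : (((σ F).1.card : ℝ)) = (F.1.card : ℝ) := by
        rw [hσdef]
        simp only
        rw [Finset.card_image_of_injective _ (MulAction.injective g⁻¹)]
      have hnum : (∑ x ∈ F.1, if x ∈ (fun x => g • x) '' A then (1:ℝ) else 0)
          = ∑ x ∈ (σ F).1, if x ∈ A then (1:ℝ) else 0 := by
        rw [hσdef]
        simp only
        rw [Finset.sum_image (fun x _ y _ h => MulAction.injective (g⁻¹ : Γ) h)]
        apply Finset.sum_congr rfl
        intro x hx
        have hiff : (x ∈ (fun x => g • x) '' A) ↔ g⁻¹ • x ∈ A := by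
          constructor
          · rintro ⟨a, ha, rfl⟩
            simpa [inv_smul_smul] using ha
          · intro h
            exact ⟨g⁻¹ • x, h, by simp [smul_inv_smul]⟩
        by_cases hmem : g⁻¹ • x ∈ A
        · rw [if_pos hmem, if_pos (hiff.mpr hmem)]
        · rw [if_neg hmem, if_neg (fun hc => hmem (hiff.mp hc))]
      rw [hnum, hden]
    rw [hcomp]
    exact Stmt10Aux.Intg_comp m σ hσpre
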